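/- Let v_1,…,v_q ∈ ℝⁿ be such that P := conv{v_1,…,v_q} has nonempty interior, and let V ∈ ℝ^{n×q} be the matrix with columns v_i. Then the map Φ : ℝⁿ → ℝⁿ, Φ(y) := V softmax(Vᵀy), is a homeomorphism from ℝⁿ onto int(P): Φ is continuous, injective, its image is exactly int(P), and its inverse Φ⁻¹ : int(P) → ℝⁿ is continuous. -/

import Mathlib

open Real

/-- The softmax map `softmax(y)_i = exp(y_i) / Σ_j exp(y_j)`. -/
noncomputable def softmax {m : ℕ} (y : Fin m → ℝ) : Fin m → ℝ :=
  fun i => Real.exp (y i) / ∑ j, Real.exp (y j)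

/-- The latent-to-design map `Φ(y) = V softmax (Vᵀ y) = Σ_i softmax(Vᵀy)_i v_i`. -/
noncomputable def Phi {n q : ℕ} (v : Fin q → Fin n → ℝ) (y : Fin n → ℝ) :
    Fin n → ℝ :=
  ∑ i, softmax (fun i : Fin q => ∑ j, v i j * y j) i • v i

namespace SoftmaxAux

variable {n q : ℕ}

def ip (a b : Fin n → ℝ) : ℝ := ∑ j, a j * b j

lemma ip_sub_right (a b c : Fin n → ℝ) : ip a (b - c) = ip a b - ip a c := by
  simp [ip, mul_sub, Finset.sum_sub_distrib]

lemma ip_sum_left (c : Fin q → ℝ) (a : Fin q → Fin n → ℝ) (u : Fin n → ℝ) :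
    ip (∑ i, c i • a i) u = ∑ i, c i * ip (a i) u := by
  simp only [ip, Finset.sum_apply, Pi.smul_apply, smul_eq_mul, Finset.sum_mul, Finset.mul_sum]
  rw [Finset.sum_comm]
  exact Finset.sum_congr rfl fun i _ => Finset.sum_congr rfl fun j _ => by ring

lemma continuous_ip_right (a : Fin n → ℝ) : Continuous (fun y => ip a y) :=
  continuous_finset_sum _ fun j _ => (continuous_const.mul (continuous_apply j))


lemma ip_add_right (a b c : Fin n → ℝ) : ip a (b + c) = ip a b + ip a c := by
  simp [ip, mul_add, Finset.sum_add_distrib]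

lemma ip_smul_right (a : Fin n → ℝ) (t : ℝ) (b : Fin n → ℝ) :
    ip a (t • b) = t * ip a b := by
  rw [ip, ip, Finset.mul_sum]
  refine Finset.sum_congr rfl fun j _ => ?_
  simp [mul_comm, mul_left_comm]

lemma ip_neg_right (a b : Fin n → ℝ) : ip a (-b) = - ip a b := by
  simp [ip]

lemma ip_zero_right (a : Fin n → ℝ) : ip a 0 = 0 := by simp [ip]

lemma ip_single (a : Fin n → ℝ) (j : Fin n) : ip a (Pi.single j 1) = a j := by
  rw [ip, Finset.sum_eq_single j] <;> simp +contextual [Pi.single_apply]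

lemma isLinearMap_ip_left (u : Fin n → ℝ) : IsLinearMap ℝ (fun x : Fin n → ℝ => ip x u) := by
  constructor
  · intro a b; simp [ip, add_mul, Finset.sum_add_distrib]
  · intro t a
    rw [smul_eq_mul, ip, ip, Finset.mul_sum]
    exact Finset.sum_congr rfl fun j _ => by simp [mul_assoc]

lemma norm_sq_le_ip_self (y : Fin n → ℝ) : ‖y‖ ^ 2 ≤ ip y y := by
  rcases isEmpty_or_nonempty (Fin n) with h | h
  · have : y = 0 := Subsingleton.elim _ _
    simp [this, ip]
  · obtain ⟨j, hj⟩ := Finite.exists_max (fun j => |y j|)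
    have hnorm : ‖y‖ = |y j| := by
      have h1 : ‖y‖ ≤ |y j| := by
        rw [pi_norm_le_iff_of_nonneg (abs_nonneg _)]
        intro i; rw [Real.norm_eq_abs]; exact hj i
      have h2 : |y j| ≤ ‖y‖ := by
        rw [← Real.norm_eq_abs]; exact norm_le_pi_norm y j
      linarith
    have hs : y j * y j ≤ ip y y := by
      rw [ip]
      exact Finset.single_le_sum (f := fun i => y i * y i) (fun i _ => mul_self_nonneg _)
        (Finset.mem_univ j)
    calc ‖y‖ ^ 2 = |y j| * |y j| := by rw [hnorm]; ring
    _ = y j * y j := abs_mul_abs_self _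
    _ ≤ ip y y := hs

variable (v : Fin q → Fin n → ℝ)

noncomputable def Z (y : Fin n → ℝ) : ℝ := ∑ i, Real.exp (ip (v i) y)

noncomputable def sm (y : Fin n → ℝ) (i : Fin q) : ℝ := Real.exp (ip (v i) y) / Z v y

noncomputable def lse (y : Fin n → ℝ) : ℝ := Real.log (Z v y)

lemma Z_pos [Nonempty (Fin q)] (y : Fin n → ℝ) : 0 < Z v y :=
  Finset.sum_pos (fun i _ => Real.exp_pos _) Finset.univ_nonempty

lemma sm_pos [Nonempty (Fin q)] (y : Fin n → ℝ) (i : Fin q) : 0 < sm v y i :=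
  div_pos (Real.exp_pos _) (Z_pos v y)

lemma sm_sum [Nonempty (Fin q)] (y : Fin n → ℝ) : ∑ i, sm v y i = 1 := by
  simp only [sm]
  rw [← Finset.sum_div]
  exact div_self (Z_pos v y).ne'

lemma Phi_eq (y : Fin n → ℝ) : Phi v y = ∑ i, sm v y i • v i := rfl

lemma ip_Phi (y u : Fin n → ℝ) : ip (Phi v y) u = ∑ i, sm v y i * ip (v i) u := by
  rw [Phi_eq, ip_sum_left]

lemma continuous_Z : Continuous (Z v) :=
  continuous_finset_sum _ fun i _ => (continuous_ip_right (v i)).rexp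

lemma continuous_lse [Nonempty (Fin q)] : Continuous (lse v) := by
  rw [continuous_iff_continuousAt]
  intro y
  exact (Real.continuousAt_log (Z_pos v y).ne').comp (continuous_Z v).continuousAt

lemma continuous_sm [Nonempty (Fin q)] (i : Fin q) : Continuous (fun y => sm v y i) :=
  ((continuous_ip_right (v i)).rexp).div (continuous_Z v) (fun y => (Z_pos v y).ne')

lemma continuous_Phi : Continuous (Phi v) := by
  rcases isEmpty_or_nonempty (Fin q) with h | h
  · have : Phi v = fun _ => 0 := by
      funext y; rw [Phi_eq]; simp
    rw [this]; exact continuous_const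
  · refine continuous_finset_sum _ fun i _ => ?_
    exact (continuous_sm v i).smul continuous_const

/-- Per-term tangent-line bound. -/
lemma tangent_bound (c m d : ℝ) :
    Real.exp c * Real.exp m * (1 + (d - m)) ≤ Real.exp (c + d) := by
  have h := Real.add_one_le_exp (d - m)
  have h2 : Real.exp c * Real.exp m * (1 + (d - m)) ≤ Real.exp c * Real.exp m * Real.exp (d - m) := by
    have := mul_pos (Real.exp_pos c) (Real.exp_pos m)
    nlinarith
  calc Real.exp c * Real.exp m * (1 + (d - m)) ≤ Real.exp c * Real.exp m * Real.exp (d - m) := h2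
  _ = Real.exp (c + d) := by rw [← Real.exp_add, ← Real.exp_add]; ring_nf

lemma tangent_bound_strict (c m d : ℝ) (hd : d ≠ m) :
    Real.exp c * Real.exp m * (1 + (d - m)) < Real.exp (c + d) := by
  have h := Real.add_one_lt_exp (sub_ne_zero.2 hd)
  have h2 : Real.exp c * Real.exp m * (1 + (d - m)) < Real.exp c * Real.exp m * Real.exp (d - m) := by
    have := mul_pos (Real.exp_pos c) (Real.exp_pos m)
    nlinarith
  calc Real.exp c * Real.exp m * (1 + (d - m)) < Real.exp c * Real.exp m * Real.exp (d - m) := h2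
  _ = Real.exp (c + d) := by rw [← Real.exp_add, ← Real.exp_add]; ring_nf


lemma sum_tangent (c d : Fin q → ℝ) (m : ℝ) (hm : ∑ i, c i * d i = (∑ i, c i) * m) :
    ∑ i, c i * Real.exp m * (1 + (d i - m)) = (∑ i, c i) * Real.exp m := by
  have h1 : ∑ i, c i * Real.exp m * (1 + (d i - m))
      = (∑ i, (c i + c i * d i - c i * m)) * Real.exp m := by
    rw [Finset.sum_mul]
    exact Finset.sum_congr rfl fun i _ => by ring
  have h2 : ∑ i, (c i + c i * d i - c i * m)
      = (∑ i, c i) + (∑ i, c i * d i) - (∑ i, c i) * m := by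
    rw [Finset.sum_sub_distrib, Finset.sum_add_distrib, Finset.sum_mul]
  rw [h1, h2, hm]
  ring

lemma weighted_dir [Nonempty (Fin q)] (y u : Fin n → ℝ) :
    ∑ i, Real.exp (ip (v i) y) * ip (v i) u = (∑ i, Real.exp (ip (v i) y)) * ip (Phi v y) u := by
  rw [ip_Phi, Finset.mul_sum]
  refine Finset.sum_congr rfl fun i _ => ?_
  have hZ := (Z_pos v y).ne'
  rw [sm, Z]
  rw [Z] at hZ
  field_simp

/-- The sum identity: Z v y * exp m ≤ Z v z where m = ip (Phi v y) (z - y). -/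
lemma Z_lower [Nonempty (Fin q)] (y z : Fin n → ℝ) :
    Z v y * Real.exp (ip (Phi v y) (z - y)) ≤ Z v z := by
  set m := ip (Phi v y) (z - y) with hm
  have hsum := sum_tangent (fun i => Real.exp (ip (v i) y)) (fun i => ip (v i) (z - y)) m
    (weighted_dir v y (z - y))
  calc Z v y * Real.exp m
      = ∑ i, Real.exp (ip (v i) y) * Real.exp m * (1 + (ip (v i) (z - y) - m)) := by
        rw [hsum, Z]
    _ ≤ ∑ i, Real.exp (ip (v i) y + ip (v i) (z - y)) :=
        Finset.sum_le_sum fun i _ => tangent_bound _ _ _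
    _ = Z v z := by
        refine Finset.sum_congr rfl fun i _ => ?_
        rw [ip_sub_right]; ring_nf

/-- KEY 1: the gradient inequality for log-sum-exp. -/
lemma key1 [Nonempty (Fin q)] (y z : Fin n → ℝ) :
    lse v y + ip (Phi v y) (z - y) ≤ lse v z := by
  have h := Z_lower v y z
  have h1 : Real.log (Z v y * Real.exp (ip (Phi v y) (z - y))) ≤ Real.log (Z v z) :=
    Real.log_le_log (mul_pos (Z_pos v y) (Real.exp_pos _)) h
  rwa [Real.log_mul (Z_pos v y).ne' (Real.exp_pos _).ne', Real.log_exp] at h1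

/-- KEY 1 equality case. -/
lemma key1_eq [Nonempty (Fin q)] (y z : Fin n → ℝ)
    (heq : lse v z = lse v y + ip (Phi v y) (z - y)) (i : Fin q) :
    ip (v i) (z - y) = ip (Phi v y) (z - y) := by
  set m := ip (Phi v y) (z - y) with hm
  by_contra hne
  have hZ : Z v z = Z v y * Real.exp m := by
    have h : Real.log (Z v z) = Real.log (Z v y * Real.exp m) := by
      rw [Real.log_mul (Z_pos v y).ne' (Real.exp_pos _).ne', Real.log_exp]
      exact heq
    exact Real.log_injOn_pos (Set.mem_Ioi.2 (Z_pos v z))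
      (Set.mem_Ioi.2 (mul_pos (Z_pos v y) (Real.exp_pos _))) h
  have hsum := sum_tangent (fun j => Real.exp (ip (v j) y)) (fun j => ip (v j) (z - y)) m
    (weighted_dir v y (z - y))
  have hstrict : Z v y * Real.exp m < Z v z := by
    calc Z v y * Real.exp m
        = ∑ j, Real.exp (ip (v j) y) * Real.exp m * (1 + (ip (v j) (z - y) - m)) := by
          rw [hsum, Z]
      _ < ∑ j, Real.exp (ip (v j) y + ip (v j) (z - y)) := by
          refine Finset.sum_lt_sum (fun j _ => tangent_bound _ _ _) ⟨i, Finset.mem_univ i, ?_⟩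
          exact tangent_bound_strict _ _ _ hne
      _ = Z v z := by
          refine Finset.sum_congr rfl fun j _ => ?_
          rw [ip_sub_right]; ring_nf
  rw [hZ] at hstrict
  exact lt_irrefl _ hstrict


lemma hull_ip_le [Nonempty (Fin q)] (u : Fin n → ℝ) {x : Fin n → ℝ}
    (hx : x ∈ convexHull ℝ (Set.range v)) :
    ip x u ≤ Finset.univ.sup' Finset.univ_nonempty (fun i => ip (v i) u) := by
  set M := Finset.univ.sup' Finset.univ_nonempty (fun i => ip (v i) u) with hM
  have hsub : convexHull ℝ (Set.range v) ⊆ {w | ip w u ≤ M} := by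
    refine convexHull_min ?_ (convex_halfSpace_le (isLinearMap_ip_left u) M)
    rintro _ ⟨i, rfl⟩
    exact Finset.le_sup' (fun i => ip (v i) u) (Finset.mem_univ i)
  exact hsub hx

lemma key2 (hint : (interior (convexHull ℝ (Set.range v))).Nonempty)
    (u : Fin n → ℝ) (c : ℝ) (h : ∀ i, ip (v i) u = c) : u = 0 := by
  obtain ⟨z, hz⟩ := hint
  have hsub : convexHull ℝ (Set.range v) ⊆ {x | ip x u = c} := by
    refine convexHull_min ?_ (convex_hyperplane (isLinearMap_ip_left u) c)
    rintro _ ⟨i, rfl⟩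
    exact h i
  by_contra hu
  have hj : ∃ j, u j ≠ 0 := by
    by_contra hcon
    push_neg at hcon
    exact hu (funext fun j => hcon j)
  obtain ⟨j, hj⟩ := hj
  obtain ⟨ε, hε, hball⟩ := Metric.isOpen_iff.1 isOpen_interior z hz
  have h1 : ip z u = c := hsub (interior_subset hz)
  set w : Fin n → ℝ := z + (ε/2) • (Pi.single j 1 : Fin n → ℝ) with hw
  have hmem : w ∈ Metric.ball z ε := by
    rw [Metric.mem_ball, dist_eq_norm, hw, add_sub_cancel_left, norm_smul]
    have : ‖(Pi.single j 1 : Fin n → ℝ)‖ ≤ 1 := by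
      rw [pi_norm_le_iff_of_nonneg zero_le_one]
      intro i
      rcases eq_or_ne i j with rfl | hne <;> simp [Pi.single_apply, *]
    have h2 : ‖(ε/2 : ℝ)‖ = ε/2 := by rw [Real.norm_eq_abs, abs_of_pos (by linarith)]
    nlinarith [norm_nonneg (Pi.single j 1 : Fin n → ℝ)]
  have hwc : ip w u = c := hsub (interior_subset (hball hmem))
  rw [hw, (isLinearMap_ip_left u).map_add, (isLinearMap_ip_left u).map_smul] at hwc
  have hsingle : ip (Pi.single j 1) u = u j := by
    rw [ip, Finset.sum_eq_single j] <;> simp +contextual [Pi.single_apply]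
  rw [hsingle, h1, smul_eq_mul] at hwc
  have : (ε/2) * u j = 0 := by linarith
  rcases mul_eq_zero.1 this with h' | h'
  · linarith
  · exact hj h'

lemma lse_ge [Nonempty (Fin q)] (y : Fin n → ℝ) (i : Fin q) : ip (v i) y ≤ lse v y := by
  rw [lse, Real.le_log_iff_exp_le (Z_pos v y)]
  exact Finset.single_le_sum (f := fun i => Real.exp (ip (v i) y))
    (fun i _ => (Real.exp_pos _).le) (Finset.mem_univ i)

lemma coercive [Nonempty (Fin q)] {x : Fin n → ℝ} {δ : ℝ} (hδ : 0 < δ)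
    (hball : Metric.closedBall x δ ⊆ convexHull ℝ (Set.range v)) (y : Fin n → ℝ) :
    ip x y + δ * ‖y‖ ≤ lse v y := by
  have hsup : Finset.univ.sup' Finset.univ_nonempty (fun i => ip (v i) y) ≤ lse v y := by
    rw [Finset.sup'_le_iff]
    exact fun i _ => lse_ge v y i
  rcases eq_or_ne y 0 with rfl | hy
  · have hx : x ∈ convexHull ℝ (Set.range v) :=
      hball (Metric.mem_closedBall_self hδ.le)
    have := hull_ip_le v 0 hx
    simpa [ip_zero_right] using this.trans hsup
  · have hny : 0 < ‖y‖ := norm_pos_iff.2 hy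
    set x' := x + (δ / ‖y‖) • y with hx'
    have hx'mem : x' ∈ Metric.closedBall x δ := by
      rw [Metric.mem_closedBall, dist_eq_norm, hx', add_sub_cancel_left, norm_smul,
        Real.norm_eq_abs, abs_of_pos (div_pos hδ hny), div_mul_cancel₀ _ hny.ne']
    have h1 : ip x' y ≤ lse v y := (hull_ip_le v y (hball hx'mem)).trans hsup
    rw [hx', (isLinearMap_ip_left y).map_add, (isLinearMap_ip_left y).map_smul,
      smul_eq_mul] at h1
    have h2 : δ * ‖y‖ ≤ (δ / ‖y‖) * ip y y := by
      have h3 : ‖y‖ ^ 2 ≤ ip y y := norm_sq_le_ip_self y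
      have h4 : (δ / ‖y‖) * ‖y‖ ^ 2 = δ * ‖y‖ := by
        field_simp
      have := mul_le_mul_of_nonneg_left h3 (div_pos hδ hny).le
      linarith
    linarith

lemma min_le [Nonempty (Fin q)] {x y : Fin n → ℝ} (hx : Phi v y = x) (z : Fin n → ℝ) :
    lse v y - ip x y ≤ lse v z - ip x z := by
  have h := key1 v y z
  rw [hx, ip_sub_right] at h
  linarith

lemma lse_zero [Nonempty (Fin q)] : lse v 0 = Real.log q := by
  rw [lse, Z]
  congr 1
  simp [ip_zero_right]

lemma norm_bound [Nonempty (Fin q)] {x y : Fin n → ℝ} {δ : ℝ} (hδ : 0 < δ)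
    (hball : Metric.closedBall x δ ⊆ convexHull ℝ (Set.range v)) (hy : Phi v y = x) :
    ‖y‖ ≤ Real.log q / δ := by
  have h1 := coercive v hδ hball y
  have h2 := min_le v hy 0
  rw [lse_zero, ip_zero_right] at h2
  rw [le_div_iff₀ hδ]
  nlinarith

lemma continuous_ip_left (u : Fin n → ℝ) : Continuous (fun x : Fin n → ℝ => ip x u) :=
  continuous_finset_sum _ fun j _ => ((continuous_apply j).mul continuous_const)

lemma exists_min [Nonempty (Fin q)] {x : Fin n → ℝ} {δ : ℝ} (hδ : 0 < δ)
    (hball : Metric.closedBall x δ ⊆ convexHull ℝ (Set.range v)) :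
    ∃ y, ∀ z, lse v y - ip x y ≤ lse v z - ip x z := by
  have hcont : Continuous (fun y => lse v y - ip x y) :=
    (continuous_lse v).sub (continuous_ip_right x)
  refine hcont.exists_forall_le ?_
  have hge : ∀ y, δ * ‖y‖ ≤ lse v y - ip x y := fun y => by
    have := coercive v hδ hball y
    linarith
  refine Filter.tendsto_atTop_mono hge ?_
  exact (tendsto_norm_cocompact_atTop).const_mul_atTop hδ

lemma stationarity [Nonempty (Fin q)] {x y₀ : Fin n → ℝ}
    (hmin : ∀ z, lse v y₀ - ip x y₀ ≤ lse v z - ip x z) : Phi v y₀ = x := by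
  have hle : ∀ u, ip x u ≤ ip (Phi v y₀) u := by
    intro u
    have key : ∀ t ∈ Set.Ioi (0:ℝ), ip x u ≤ ip (Phi v (y₀ + t • u)) u := by
      intro t ht
      rw [Set.mem_Ioi] at ht
      set z := y₀ + t • u with hz
      have h1 : lse v y₀ - ip x y₀ ≤ lse v z - ip x z := hmin z
      have h2 : lse v z + ip (Phi v z) (y₀ - z) ≤ lse v y₀ := key1 v z y₀
      have e1 : ip x z = ip x y₀ + t * ip x u := by
        rw [hz, ip_add_right, ip_smul_right]
      have e2 : ip (Phi v z) (y₀ - z) = -(t * ip (Phi v z) u) := by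
        have : y₀ - z = -(t • u) := by rw [hz]; abel
        rw [this, ip_neg_right, ip_smul_right]
      rw [e2] at h2
      rw [e1] at h1
      have h3 : t * ip x u ≤ t * ip (Phi v z) u := by linarith
      exact (mul_le_mul_iff_right₀ ht).1 h3
    have hcont : ContinuousWithinAt (fun t : ℝ => ip (Phi v (y₀ + t • u)) u)
        (Set.Ioi 0) 0 := by
      apply Continuous.continuousWithinAt
      exact (continuous_ip_left u).comp
        ((continuous_Phi v).comp (continuous_const.add (continuous_id.smul continuous_const)))
    have h0 : Filter.Tendsto (fun t : ℝ => ip (Phi v (y₀ + t • u)) u)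
        (nhdsWithin 0 (Set.Ioi 0)) (nhds (ip (Phi v y₀) u)) := by
      have : ip (Phi v (y₀ + (0:ℝ) • u)) u = ip (Phi v y₀) u := by simp
      rw [← this]
      exact hcont
    exact ge_of_tendsto h0 (Filter.eventually_iff_exists_mem.2
      ⟨Set.Ioi 0, self_mem_nhdsWithin, key⟩)
  funext j
  have a := hle (Pi.single j 1)
  have b := hle (-(Pi.single j 1))
  rw [ip_neg_right, ip_neg_right, ip_single, ip_single] at b
  rw [ip_single, ip_single] at a
  linarith


lemma phi_injective (hint : (interior (convexHull ℝ (Set.range v))).Nonempty)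
    [Nonempty (Fin q)] : Function.Injective (Phi v) := by
  intro a b hab
  have h1 := key1 v a b
  have h2 := key1 v b a
  have e2 : ip (Phi v b) (a - b) = -(ip (Phi v a) (b - a)) := by
    rw [hab, ← ip_neg_right, neg_sub]
  rw [e2] at h2
  have heq : lse v b = lse v a + ip (Phi v a) (b - a) := by linarith
  have hall := key1_eq v a b heq
  have : b - a = 0 := key2 v hint (b - a) (ip (Phi v a) (b - a)) hall
  have := sub_eq_zero.1 this
  exact this.symm

lemma phi_mem_interior (hint : (interior (convexHull ℝ (Set.range v))).Nonempty)
    [Nonempty (Fin q)] (y : Fin n → ℝ) :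
    Phi v y ∈ interior (convexHull ℝ (Set.range v)) := by
  obtain ⟨z, hz⟩ := hint
  -- represent z as a convex combination of the v i
  have hzP : z ∈ convexHull ℝ (Set.range v) := interior_subset hz
  rw [convexHull_range_eq_exists_affineCombination] at hzP
  obtain ⟨s, w, hw0, hw1, hcomb⟩ := hzP
  classical
  set μ : Fin q → ℝ := fun i => if i ∈ s then w i else 0 with hμ
  have hμ0 : ∀ i, 0 ≤ μ i := fun i => by
    rw [hμ]; dsimp only; split
    · exact hw0 i ‹_›
    · exact le_refl 0
  have hμ1 : ∑ i, μ i = 1 := by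
    rw [hμ]
    rw [Finset.sum_ite_mem]
    rwa [Finset.univ_inter]
  have hμle : ∀ i, μ i ≤ 1 := by
    intro i
    rw [← hμ1]
    exact Finset.single_le_sum (fun i _ => hμ0 i) (Finset.mem_univ i)
  have hzsum : ∑ i, μ i • v i = z := by
    rw [← hcomb, Finset.affineCombination_eq_linear_combination s v w hw1]
    rw [hμ]
    simp only [ite_smul, zero_smul]
    rw [Finset.sum_ite_mem, Finset.univ_inter]
  -- choose t
  set t : ℝ := min (1/2) (Finset.univ.inf' Finset.univ_nonempty (sm v y)) with ht
  have ht0 : 0 < t := by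
    rw [ht]
    apply lt_min (by norm_num)
    rw [Finset.lt_inf'_iff]
    exact fun i _ => sm_pos v y i
  have ht1 : t ≤ 1/2 := min_le_left _ _
  have hti : ∀ i, t ≤ sm v y i := fun i =>
    le_trans (min_le_right _ _) (Finset.inf'_le _ (Finset.mem_univ i))
  set lam : Fin q → ℝ := fun i => (sm v y i - t * μ i) / (1 - t) with hlam
  have h1t : (0:ℝ) < 1 - t := by linarith
  have hlam0 : ∀ i, 0 ≤ lam i := by
    intro i
    apply div_nonneg _ h1t.le
    have := hμle i
    have := hti i
    nlinarith
  have hlam1 : ∑ i, lam i = 1 := by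
    rw [hlam]
    rw [← Finset.sum_div]
    rw [Finset.sum_sub_distrib, sm_sum, ← Finset.mul_sum, hμ1, mul_one]
    field_simp
  have hy' : ∑ i, lam i • v i ∈ convexHull ℝ (Set.range v) := by
    rw [← Finset.affineCombination_eq_linear_combination Finset.univ v lam hlam1]
    exact affineCombination_mem_convexHull (fun i _ => hlam0 i) hlam1
  have hdecomp : Phi v y = (1 - t) • (∑ i, lam i • v i) + t • z := by
    rw [← hzsum, Phi_eq, Finset.smul_sum, Finset.smul_sum, ← Finset.sum_add_distrib]
    refine Finset.sum_congr rfl fun i _ => ?_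
    rw [smul_smul, smul_smul, ← add_smul, hlam]
    congr 1
    field_simp
    ring
  rw [hdecomp]
  exact (convex_convexHull ℝ _).combo_self_interior_mem_interior hy' hz h1t.le ht0 (by ring)

/-- continuity of the inverse from compactness -/
lemma inv_cont_aux {Φ g : (Fin n → ℝ) → (Fin n → ℝ)} (hΦ : Continuous Φ)
    (hinj : Function.Injective Φ) {s K : Set (Fin n → ℝ)}
    (hK : IsCompact K) (hmap : ∀ x ∈ s, g x ∈ K) (hinv : ∀ x ∈ s, Φ (g x) = x) :
    ContinuousOn g s := by
  haveI : CompactSpace K := isCompact_iff_compactSpace.mp hK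
  set Φ' : K → (Fin n → ℝ) := fun k => Φ k with hΦ'
  have hc : Continuous Φ' := hΦ.comp continuous_subtype_val
  have hΦ'inj : Function.Injective Φ' := fun a b hab => Subtype.ext (hinj hab)
  have hemb : Topology.IsEmbedding Φ' := (hc.isClosedEmbedding hΦ'inj).toIsEmbedding
  set e : K ≃ₜ Set.range Φ' := hemb.toHomeomorph with he
  have hmem : ∀ xs : s, (xs : Fin n → ℝ) ∈ Set.range Φ' :=
    fun xs => ⟨⟨g xs, hmap xs xs.2⟩, hinv xs xs.2⟩
  rw [continuousOn_iff_continuous_restrict]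
  have hrestr : s.domRestrict g = fun (xs : s) => ((e.symm ⟨(xs : Fin n → ℝ), hmem xs⟩ : K) : Fin n → ℝ) := by
    funext xs
    obtain ⟨x, hx⟩ := xs
    have h1 : e ⟨g x, hmap x hx⟩ = ⟨x, hmem ⟨x, hx⟩⟩ := by
      apply Subtype.ext
      show Φ' ⟨g x, hmap x hx⟩ = x
      exact hinv x hx
    have h2 := e.symm_apply_apply ⟨g x, hmap x hx⟩
    rw [h1] at h2
    show g x = _
    rw [h2]
  rw [hrestr]
  exact continuous_subtype_val.comp (e.symm.continuous.comp
    (Continuous.subtype_mk continuous_subtype_val _))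

end SoftmaxAux

open SoftmaxAux

/-- Let `v_1, …, v_q ∈ ℝⁿ` be such that `P = conv {v_1, …, v_q}` has
nonempty interior.  Then `Φ(y) = V softmax (Vᵀ y)` is a homeomorphism from `ℝⁿ`
onto `int P`: it is continuous, injective, its range is exactly `int P`, and it
has a continuous inverse on `int P`. -/
theorem softmax_param_homeomorphism {n q : ℕ} (v : Fin q → Fin n → ℝ)
    (hint : (interior (convexHull ℝ (Set.range v))).Nonempty) :
    Continuous (Phi v) ∧
    Function.Injective (Phi v) ∧
    Set.range (Phi v) = interior (convexHull ℝ (Set.range v)) ∧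
    ∃ g : (Fin n → ℝ) → (Fin n → ℝ),
      ContinuousOn g (interior (convexHull ℝ (Set.range v))) ∧
      (∀ y, g (Phi v y) = y) ∧
      ∀ x ∈ interior (convexHull ℝ (Set.range v)), Phi v (g x) = x := by
  have hq : Nonempty (Fin q) := by
    by_contra h
    rw [not_nonempty_iff] at h
    obtain ⟨z, hz⟩ := hint
    rw [Set.range_eq_empty v, convexHull_empty, interior_empty] at hz
    exact hz
  have hcont : Continuous (Phi v) := continuous_Phi v
  have hinj : Function.Injective (Phi v) := phi_injective v hint
  have hrange : Set.range (Phi v) = interior (convexHull ℝ (Set.range v)) := by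
    apply Set.eq_of_subset_of_subset
    · rintro _ ⟨y, rfl⟩
      exact phi_mem_interior v hint y
    · intro x hx
      obtain ⟨ε, hε, hball⟩ := Metric.isOpen_iff.1 isOpen_interior x hx
      have hball2 : Metric.closedBall x (ε/2) ⊆ convexHull ℝ (Set.range v) := by
        intro y' hy'
        refine interior_subset (hball ?_)
        rw [Metric.mem_closedBall] at hy'
        rw [Metric.mem_ball]
        linarith
      obtain ⟨y₀, hmin⟩ := exists_min v (half_pos hε) hball2
      exact ⟨y₀, stationarity v hmin⟩
  refine ⟨hcont, hinj, hrange, Function.invFun (Phi v), ?_, ?_, ?_⟩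
  · -- continuity of the inverse
    set g := Function.invFun (Phi v) with hg
    have hg2 : ∀ x ∈ interior (convexHull ℝ (Set.range v)), Phi v (g x) = x := by
      intro x hx
      apply Function.invFun_eq
      rw [← hrange] at hx
      exact hx
    intro x₀ hx₀
    obtain ⟨ε, hε, hball⟩ := Metric.isOpen_iff.1 isOpen_interior x₀ hx₀
    set δ : ℝ := ε/3 with hδdef
    have hδ : 0 < δ := by positivity
    have hsub2 : Metric.closedBall x₀ (2*δ) ⊆ interior (convexHull ℝ (Set.range v)) := by
      intro y' hy'
      refine hball ?_
      rw [Metric.mem_closedBall] at hy'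
      rw [Metric.mem_ball]
      rw [hδdef] at hy'
      linarith
    have hmem1 : ∀ x ∈ Metric.closedBall x₀ δ, x ∈ interior (convexHull ℝ (Set.range v)) := by
      intro x hx
      refine hsub2 ?_
      rw [Metric.mem_closedBall] at hx ⊢
      linarith
    have hmap : ∀ x ∈ Metric.closedBall x₀ δ,
        g x ∈ Metric.closedBall (0 : Fin n → ℝ) (Real.log q / δ) := by
      intro x hx
      have hball3 : Metric.closedBall x δ ⊆ convexHull ℝ (Set.range v) := by
        intro y' hy'
        refine interior_subset (hsub2 ?_)
        rw [Metric.mem_closedBall] at hy' hx ⊢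
        calc dist y' x₀ ≤ dist y' x + dist x x₀ := dist_triangle _ _ _
        _ ≤ 2*δ := by linarith
      have hb := norm_bound v hδ hball3 (hg2 x (hmem1 x hx))
      rwa [Metric.mem_closedBall, dist_zero_right]
    have hinvk : ∀ x ∈ Metric.closedBall x₀ δ, Phi v (g x) = x :=
      fun x hx => hg2 x (hmem1 x hx)
    have hco : ContinuousOn g (Metric.closedBall x₀ δ) :=
      inv_cont_aux hcont hinj (isCompact_closedBall _ _) hmap hinvk
    exact (hco.continuousAt (Metric.closedBall_mem_nhds x₀ hδ)).continuousWithinAt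
  · exact fun y => Function.leftInverse_invFun hinj y
  · intro x hx
    apply Function.invFun_eq
    rw [← hrange] at hx
    exact hx
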